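/- Let α ∈ (0,2], A > 0, h > 0, and define Ω²(ξ) = σ_h(ξ) ( σ_h(ξ) − 2A² ) with σ_h(ξ) = |(2/h) sin(hξ/2)|^α (the modulational-instability dispersion relation of the focusing fDNLS linearized around the CW solution A e^{i|A|²t}). Then for ξ ∈ (0, π/h), (d/dξ) Ω²(ξ) = α h cot(hξ/2) ((2/h) sin(hξ/2))^α ( ((2/h) sin(hξ/2))^α − A² ). Moreover: (i) if (2/h)^α > A², then ξ_m = (2/h) arcsin( h A^{2/α} / 2 ) lies in (0, π/h), is the unique maximizer of −Ω² on (0, π/h), and the maximal squared gain is −Ω²(ξ_m) = A⁴, so the maximal gain is Ω_m′ = A², independent of h and α; (ii) if (2/h)^α ≤ A², then −Ω² is maximized over (0, π/h] at the band edge ξ = π/h, with maximal gain Ω_m = √( (2A² − (2/h)^α) (2/h)^α ). -/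

import Mathlib

noncomputable section

open Real Set

/-- Symbol `σ_h(ξ) = |(2/h) sin(hξ/2)|^α` of the discrete fractional Laplacian on the
lattice of mesh `h`. -/
def symb (h α ξ : ℝ) : ℝ := |2 / h * Real.sin (h * ξ / 2)| ^ α

/-- The modulational-instability dispersion relation `Ω²(ξ) = σ_h(ξ)(σ_h(ξ) - 2A²)` of the
focusing fDNLS linearized around the CW solution `A e^{i|A|²t}`. -/
def Omega2 (h α A ξ : ℝ) : ℝ := symb h α ξ * (symb h α ξ - 2 * A ^ 2)

lemma sin_pos_of_mem (h : ℝ) (hh : 0 < h) {ξ : ℝ} (hξ : ξ ∈ Set.Ioo (0:ℝ) (π / h)) :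
    0 < Real.sin (h * ξ / 2) ∧ h * ξ / 2 < π / 2 := by
  have h1 : 0 < h * ξ / 2 := div_pos (mul_pos hh hξ.1) two_pos
  have h2 : h * ξ / 2 < π / 2 := by nlinarith [hξ.2, (lt_div_iff₀ hh).mp hξ.2]
  exact ⟨Real.sin_pos_of_pos_of_lt_pi h1 (by nlinarith [Real.pi_pos]), h2⟩

lemma symb_eq (h α : ℝ) (hh : 0 < h) {ξ : ℝ} (hξ : ξ ∈ Set.Ioo (0:ℝ) (π / h)) :
    symb h α ξ = (2 / h * Real.sin (h * ξ / 2)) ^ α := by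
  have hs := (sin_pos_of_mem h hh hξ).1
  rw [symb, abs_of_pos (by positivity)]

/-- Section 5: derivative of the MI dispersion relation, the
fastest-growth frequency, and the maximum gain. -/
theorem statement19 (α A h : ℝ) (hα : 0 < α) (hα' : α ≤ 2) (hA : 0 < A) (hh : 0 < h) :
    (∀ ξ ∈ Set.Ioo (0:ℝ) (Real.pi / h),
      deriv (Omega2 h α A) ξ =
        α * h * (Real.cos (h * ξ / 2) / Real.sin (h * ξ / 2)) *
          (2 / h * Real.sin (h * ξ / 2)) ^ α *
          ((2 / h * Real.sin (h * ξ / 2)) ^ α - A ^ 2)) ∧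
    (A ^ 2 < (2 / h) ^ α →
      (2 / h * Real.arcsin (h * A ^ (2 / α) / 2)) ∈ Set.Ioo (0:ℝ) (Real.pi / h) ∧
      (∀ ξ ∈ Set.Ioo (0:ℝ) (Real.pi / h),
        -Omega2 h α A ξ ≤ -Omega2 h α A (2 / h * Real.arcsin (h * A ^ (2 / α) / 2))) ∧
      (∀ ξ ∈ Set.Ioo (0:ℝ) (Real.pi / h),
        -Omega2 h α A ξ = -Omega2 h α A (2 / h * Real.arcsin (h * A ^ (2 / α) / 2)) →
          ξ = 2 / h * Real.arcsin (h * A ^ (2 / α) / 2)) ∧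
      -Omega2 h α A (2 / h * Real.arcsin (h * A ^ (2 / α) / 2)) = A ^ 4) ∧
    ((2 / h) ^ α ≤ A ^ 2 →
      (∀ ξ ∈ Set.Ioc (0:ℝ) (Real.pi / h), -Omega2 h α A ξ ≤ -Omega2 h α A (Real.pi / h)) ∧
      Real.sqrt (-Omega2 h α A (Real.pi / h)) =
        Real.sqrt ((2 * A ^ 2 - (2 / h) ^ α) * (2 / h) ^ α)) := by
  have hh' : h ≠ 0 := hh.ne'
  have hA2 : (A : ℝ) ^ 2 = A ^ (2 : ℝ) := by
    rw [← Real.rpow_natCast A 2]; norm_num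
  refine ⟨?_, ?_, ?_⟩
  · -- derivative
    intro ξ hξ
    obtain ⟨hsx, hlt⟩ := sin_pos_of_mem h hh hξ
    have hs : 0 < 2 / h * Real.sin (h * ξ / 2) := by positivity
    have hev : Omega2 h α A =ᶠ[nhds ξ]
        fun ξ => (2 / h * Real.sin (h * ξ / 2)) ^ α *
          ((2 / h * Real.sin (h * ξ / 2)) ^ α - 2 * A ^ 2) := by
      filter_upwards [Ioo_mem_nhds hξ.1 hξ.2] with x hx
      rw [Omega2, symb_eq h α hh hx]
    have hinner : HasDerivAt (fun ξ : ℝ => 2 / h * Real.sin (h * ξ / 2))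
        (2 / h * (Real.cos (h * ξ / 2) * (h / 2))) ξ := by
      have h1 : HasDerivAt (fun ξ : ℝ => h * ξ / 2) (h / 2) ξ := by
        simpa using ((hasDerivAt_id ξ).const_mul h).div_const 2
      exact (h1.sin).const_mul (2 / h)
    have ht : HasDerivAt (fun ξ : ℝ => (2 / h * Real.sin (h * ξ / 2)) ^ α)
        (2 / h * (Real.cos (h * ξ / 2) * (h / 2)) * α *
          (2 / h * Real.sin (h * ξ / 2)) ^ (α - 1)) ξ :=
      hinner.rpow_const (Or.inl hs.ne')
    have hO := ht.mul (ht.sub_const (2 * A ^ 2))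
    simp only [Pi.mul_def] at hO
    rw [hev.deriv_eq, hO.deriv]
    have hpow : (2 / h * Real.sin (h * ξ / 2)) ^ (α - 1) =
        (2 / h * Real.sin (h * ξ / 2)) ^ α / (2 / h * Real.sin (h * ξ / 2)) := by
      rw [Real.rpow_sub hs, Real.rpow_one]
    rw [hpow]
    field_simp
    ring
  · -- case (i)
    intro hcase
    set y : ℝ := h * A ^ (2 / α) / 2 with hy
    have hAr : (0:ℝ) < A ^ (2 / α) := Real.rpow_pos_of_pos hA _
    have hAlt : A ^ (2 / α) < 2 / h := by
      have h1 : (A ^ 2) ^ ((1:ℝ) / α) < ((2 / h) ^ α) ^ ((1:ℝ) / α) :=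
        Real.rpow_lt_rpow (by positivity) hcase (by positivity)
      rwa [hA2, ← Real.rpow_mul hA.le, ← Real.rpow_mul (by positivity : (0:ℝ) ≤ 2 / h),
        mul_one_div, mul_one_div, div_self hα.ne', Real.rpow_one] at h1
    have hy0 : 0 < y := by rw [hy]; positivity
    have hy1 : y < 1 := by
      rw [hy, div_lt_one (by norm_num : (0:ℝ) < 2)]
      calc h * A ^ (2 / α) < h * (2 / h) := mul_lt_mul_of_pos_left hAlt hh
        _ = 2 := by field_simp
    have harc0 : 0 < Real.arcsin y := Real.arcsin_pos.mpr hy0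
    have harc2 : Real.arcsin y < π / 2 := Real.arcsin_lt_pi_div_two.mpr hy1
    set ξm : ℝ := 2 / h * Real.arcsin y with hξm
    have hmem : ξm ∈ Set.Ioo (0:ℝ) (π / h) := by
      constructor
      · rw [hξm]; positivity
      · rw [hξm, lt_div_iff₀ hh]
        have heq : 2 / h * Real.arcsin y * h = 2 * Real.arcsin y := by
          field_simp
        rw [heq]; linarith
    have hsin_m : Real.sin (h * ξm / 2) = y := by
      have heq : h * ξm / 2 = Real.arcsin y := by rw [hξm]; field_simp
      rw [heq, Real.sin_arcsin (by linarith) hy1.le]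
    have hsymb_m : symb h α ξm = A ^ 2 := by
      rw [symb, hsin_m]
      have : 2 / h * y = A ^ (2 / α) := by rw [hy]; field_simp
      rw [this, abs_of_pos hAr, ← Real.rpow_mul hA.le, div_mul_cancel₀ _ hα.ne',
        ← hA2]
    have hval : -Omega2 h α A ξm = A ^ 4 := by
      rw [Omega2, hsymb_m]; ring
    refine ⟨hmem, ?_, ?_, hval⟩
    · intro ξ hξ
      rw [hval, Omega2]
      have ht0 : 0 ≤ symb h α ξ := Real.rpow_nonneg (abs_nonneg _) α
      nlinarith [sq_nonneg (symb h α ξ - A ^ 2)]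
    · intro ξ hξ heq
      rw [hval, Omega2] at heq
      have hteq : symb h α ξ = A ^ 2 := by nlinarith [sq_nonneg (symb h α ξ - A ^ 2)]
      obtain ⟨hsx, hlt⟩ := sin_pos_of_mem h hh hξ
      have hs : 0 < 2 / h * Real.sin (h * ξ / 2) := by positivity
      rw [symb_eq h α hh hξ] at hteq
      have hseq : 2 / h * Real.sin (h * ξ / 2) = A ^ (2 / α) := by
        have h2 : ((2 / h * Real.sin (h * ξ / 2)) ^ α) ^ ((1:ℝ) / α)
            = ((A : ℝ) ^ (2:ℝ)) ^ ((1:ℝ) / α) := by rw [hteq, hA2]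
        rwa [← Real.rpow_mul hs.le, mul_one_div, div_self hα.ne', Real.rpow_one,
          ← Real.rpow_mul hA.le, mul_one_div] at h2
      have hsiny : Real.sin (h * ξ / 2) = y := by
        rw [hy]; field_simp at hseq ⊢; linarith
      have harcs : Real.arcsin y = h * ξ / 2 := by
        have h0 : 0 < h * ξ / 2 := div_pos (mul_pos hh hξ.1) two_pos
        rw [← hsiny, Real.arcsin_sin (by linarith [Real.pi_pos]) hlt.le]
      rw [hξm, harcs]; field_simp
  · -- case (ii)
    intro hcase
    have hsymb_pi : symb h α (π / h) = (2 / h) ^ α := by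
      rw [symb]
      have heq : h * (π / h) / 2 = π / 2 := by field_simp
      rw [heq, Real.sin_pi_div_two, mul_one, abs_of_pos (by positivity)]
    constructor
    · intro ξ hξ
      have ht0 : 0 ≤ symb h α ξ := Real.rpow_nonneg (abs_nonneg _) α
      have htle : symb h α ξ ≤ (2 / h) ^ α := by
        rw [symb]
        apply Real.rpow_le_rpow (abs_nonneg _) _ hα.le
        rw [abs_mul, abs_of_pos (by positivity : (0:ℝ) < 2 / h)]
        calc 2 / h * |Real.sin (h * ξ / 2)| ≤ 2 / h * 1 := by
              apply mul_le_mul_of_nonneg_left (Real.abs_sin_le_one (h * ξ / 2)) (by positivity)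
          _ = 2 / h := by ring
      rw [Omega2, Omega2, hsymb_pi]
      nlinarith [htle, hcase, ht0]
    · congr 1
      rw [Omega2, hsymb_pi]; ring

end
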